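/- (Pareto indifference implies linear representability) Let X be a nonempty set, I a nonempty index set, and for i ∈ I ∪ {0} let ≿_i be preorders on X with co-convex representations f_i : X → V_i in partially ordered vector spaces. If Pareto indifference holds (x ∼_i y for all i ∈ I implies x ∼_0 y), then there exist a partially ordered vector space V and a linear map L : ∏_{i∈I} V_i → V such that L∘f_I represents ≿_0, where f_I = (f_i)_{i∈I}. -/

import Mathlib

universe u v

def IsLinearPartialOrder {V : Type*} [AddCommGroup V] [Module ℝ V]
    (r : V → V → Prop) : Prop :=
  (∀ v, r v v) ∧ (∀ u v w, r u v → r v w → r u w) ∧ (∀ v w, r v w → r w v → v = w) ∧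
    ∀ (v v' w : V) (l : ℝ), 0 < l → (r v v' ↔ r (l • v + w) (l • v' + w))

set_option maxHeartbeats 1000000 in
theorem linear_rep_of_pareto_indifference {X : Type*} [Nonempty X]
    {I : Type u} [Nonempty I]
    {V : I → Type v} [∀ i, AddCommGroup (V i)] [∀ i, Module ℝ (V i)]
    {V0 : Type*} [AddCommGroup V0] [Module ℝ V0]
    (r : I → X → X → Prop) (r0 : X → X → Prop)
    (rV : ∀ i, V i → V i → Prop) (rV0 : V0 → V0 → Prop)
    (hV : ∀ i, IsLinearPartialOrder (rV i)) (hV0 : IsLinearPartialOrder rV0)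
    (f : ∀ i, X → V i) (f0 : X → V0)
    (hrep : ∀ i, ∀ x y, r i x y ↔ rV i (f i x) (f i y))
    (hrep0 : ∀ x y, r0 x y ↔ rV0 (f0 x) (f0 y))
    (hconv : Convex ℝ (Set.range fun x => ((fun i => f i x, f0 x) : (∀ i, V i) × V0)))
    (hP1 : ∀ x y : X, (∀ i, r i x y ∧ r i y x) → (r0 x y ∧ r0 y x)) :
    ∃ (W : ModuleCat.{max u v} ℝ) (rW : W → W → Prop),
      IsLinearPartialOrder rW ∧
      ∃ L : (∀ i, V i) →ₗ[ℝ] W,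
        ∀ x y : X, r0 x y ↔ rW (L fun i => f i x) (L fun i => f i y) := by
  classical
  obtain ⟨x0⟩ := ‹Nonempty X›
  set F : X → (∀ i, V i) × V0 := fun x => (fun i => f i x, f0 x) with hF
  -- key: equal images under the family imply equal f0
  have hkey : ∀ x y : X, (fun i => f i x) = (fun i => f i y) → f0 x = f0 y := by
    intro x y h
    have h' : ∀ i, f i x = f i y := fun i => congrFun h i
    have hr : ∀ i, r i x y ∧ r i y x := by
      intro i
      constructor
      · rw [hrep i, h' i]; exact (hV i).1 _
      · rw [hrep i, h' i]; exact (hV i).1 _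
    obtain ⟨h1, h2⟩ := hP1 x y hr
    exact hV0.2.2.1 _ _ ((hrep0 x y).1 h1) ((hrep0 y x).1 h2)
  -- the cone of differences is a submodule
  have hconv' : Convex ℝ (Set.range F) := hconv
  set D : Submodule ℝ ((∀ i, V i) × V0) :=
    { carrier := {w | ∃ x y : X, ∃ μ : ℝ, 0 ≤ μ ∧ w = μ • (F x - F y)}
      zero_mem' := ⟨x0, x0, 0, le_refl 0, by simp⟩
      add_mem' := by
        rintro w1 w2 ⟨x1, y1, μ, hμ, rfl⟩ ⟨x2, y2, ν, hν, rfl⟩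
        rcases hμ.eq_or_lt with rfl | hμ0
        · exact ⟨x2, y2, ν, hν, by rw [zero_smul, zero_add]⟩
        rcases hν.eq_or_lt with rfl | hν0
        · exact ⟨x1, y1, μ, hμ, by rw [zero_smul, add_zero]⟩
        have hs : 0 < μ + ν := by linarith
        set t : ℝ := μ / (μ + ν) with ht
        have ht0 : 0 ≤ t := by positivity
        have ht1 : 0 ≤ 1 - t := by
          rw [ht, sub_nonneg, div_le_one hs]; linarith
        have htt : t + (1 - t) = 1 := by ring
        obtain ⟨z, hz⟩ := hconv' (Set.mem_range_self x1) (Set.mem_range_self x2) ht0 ht1 htt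
        obtain ⟨z', hz'⟩ := hconv' (Set.mem_range_self y1) (Set.mem_range_self y2) ht0 ht1 htt
        refine ⟨z, z', μ + ν, le_of_lt hs, ?_⟩
        have hne : μ + ν ≠ 0 := hs.ne'
        have h1 : (μ + ν) * t = μ := by rw [ht]; field_simp
        have h2 : (μ + ν) * (1 - t) = ν := by rw [ht]; field_simp; ring
        rw [hz, hz']
        simp only [smul_sub, smul_add, smul_smul]
        rw [h1, h2]
        abel
      smul_mem' := by
        rintro c w ⟨x, y, μ, hμ, rfl⟩
        rw [smul_smul]
        rcases le_or_gt 0 (c * μ) with h | h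
        · exact ⟨x, y, c * μ, h, rfl⟩
        · exact ⟨y, x, -(c * μ), by linarith, by rw [neg_smul, ← smul_neg, neg_sub]⟩ } with hD
  -- zero first coordinate implies zero second coordinate
  have hDkey : ∀ w ∈ D, w.1 = 0 → w.2 = 0 := by
    rintro w ⟨x, y, μ, hμ, rfl⟩ h1
    rcases hμ.eq_or_lt with rfl | hμ0
    · simp
    · have h1' : μ • ((F x).1 - (F y).1) = 0 := h1
      have hd0 : (F x).1 - (F y).1 = 0 :=
        smul_right_injective _ (ne_of_gt hμ0) (by simpa using h1')
      have hxy : (F x).1 = (F y).1 := sub_eq_zero.mp hd0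
      have h2 : f0 x = f0 y := hkey x y hxy
      show μ • ((F x).2 - (F y).2) = 0
      simp [hF, h2]
  -- linear maps out of D
  set p : D →ₗ[ℝ] (∀ i, V i) := (LinearMap.fst ℝ _ _).comp D.subtype with hp
  set q : D →ₗ[ℝ] V0 := (LinearMap.snd ℝ _ _).comp D.subtype with hq
  have hker : LinearMap.ker p ≤ LinearMap.ker q := by
    intro d hd
    rw [LinearMap.mem_ker] at *
    exact hDkey d.1 d.2 hd
  set qbar : (D ⧸ LinearMap.ker p) →ₗ[ℝ] V0 := (LinearMap.ker p).liftQ q hker with hqbar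
  set e := p.quotKerEquivRange with he
  set h1 : LinearMap.range p →ₗ[ℝ] V0 := qbar.comp (e.symm : _ →ₗ[ℝ] _) with hh1
  obtain ⟨G, hG⟩ := h1.exists_extend
  have hGp : ∀ d : D, G (p d) = q d := by
    intro d
    have h3 : e.symm (p.rangeRestrict d) = Submodule.Quotient.mk d := by
      rw [LinearEquiv.symm_apply_eq]
      exact Subtype.ext (p.quotKerEquivRange_apply_mk d).symm
    have h4 : G (p d) = G ((LinearMap.range p).subtype (p.rangeRestrict d)) := rfl
    rw [h4, ← LinearMap.comp_apply, hG, hh1, LinearMap.comp_apply, LinearEquiv.coe_coe, h3,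
      hqbar]
    exact Submodule.liftQ_apply _ _ _
  -- G applied to the image of f
  have hGf : ∀ x : X, G (fun i => f i x) = f0 x - f0 x0 + G (fun i => f i x0) := by
    intro x
    have hd : F x - F x0 ∈ D := ⟨x, x0, 1, zero_le_one, (one_smul ℝ _).symm⟩
    have := hGp ⟨F x - F x0, hd⟩
    have hp1 : p ⟨F x - F x0, hd⟩ = (fun i => f i x) - (fun i => f i x0) := rfl
    have hq1 : q ⟨F x - F x0, hd⟩ = f0 x - f0 x0 := rfl
    rw [hp1, hq1] at this
    rw [map_sub] at this
    have : G (fun i => f i x) = f0 x - f0 x0 + G (fun i => f i x0) := by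
      rw [← this]; abel
    exact this
  -- construct W as the quotient by ker G
  set Wq := ((∀ i, V i) ⧸ LinearMap.ker G) with hWq
  set Ghat : Wq →ₗ[ℝ] V0 := (LinearMap.ker G).liftQ G le_rfl with hGhat
  set rW : Wq → Wq → Prop := fun a b => rV0 (Ghat a) (Ghat b) with hrW
  have hinj : Function.Injective Ghat := by
    rw [← LinearMap.ker_eq_bot]
    exact Submodule.ker_liftQ_eq_bot _ _ _ le_rfl
  have hlin : IsLinearPartialOrder rW := by
    unfold IsLinearPartialOrder
    refine ⟨fun a => hV0.1 _, fun a b c hab hbc => hV0.2.1 _ _ _ hab hbc,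
      fun a b hab hba => hinj (hV0.2.2.1 _ _ hab hba), fun a b c l hl => ?_⟩
    have h5 := hV0.2.2.2 (Ghat a) (Ghat b) (Ghat c) l hl
    simp only [hrW]
    rw [h5, map_add, map_add, map_smul, map_smul]
  refine ⟨ModuleCat.of ℝ Wq, rW, hlin, (LinearMap.ker G).mkQ, fun x y => ?_⟩
  rw [hrep0]
  show rV0 (f0 x) (f0 y) ↔ rV0 (G fun i => f i x) (G fun i => f i y)
  rw [hGf x, hGf y]
  have harg : ∀ v : V0, v - f0 x0 + G (fun i => f i x0) =
      v + (-(f0 x0) + G (fun i => f i x0)) := fun v => by abel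
  rw [harg (f0 x), harg (f0 y)]
  have h6 := hV0.2.2.2 (f0 x) (f0 y) (-(f0 x0) + G (fun i => f i x0)) 1 one_pos
  rw [one_smul, one_smul] at h6
  exact h6
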